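/- Let G be an infinite group with a proper right-invariant distance. (1) If a horofunction j ∈ ∂G satisfies inf_{g ∈ G} j(g) = −∞, then its horoball {x ∈ G : j(x) < 0} contains balls of arbitrarily large radius, i.e. for every R > 0 there is g ∈ G with B_R(g) ⊆ {j < 0}. (2) Consequently, if G is generated by a finite set 𝒮 and is equipped with the word (ℓ¹) distance d_{ℓ¹}(g,h) = inf{n ∈ ℕ : gh^{-1} is a product of n elements of 𝒮 ∪ 𝒮^{-1}}, then every horoball of G contains balls of arbitrarily large radius. -/

import Mathlib

open Metric Filter Topology

/-- The Busemann map `b_g : x ↦ d(g,x) - d(g,1)`. -/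
noncomputable def busemann (G : Type*) [Group G] [MetricSpace G] (g : G) : C(G, ℝ) :=
  ⟨fun x => dist g x - dist g (1 : G),
    (continuous_const.dist continuous_id).sub continuous_const⟩

/-- A horofunction on `G`. -/
def IsHorofunction (G : Type*) [Group G] [MetricSpace G] (j : C(G, ℝ)) : Prop :=
  j ∈ closure (Set.range (busemann G)) ∧ j ∉ Set.range (busemann G)

/-- A horoball is a sublevel set `{x : j x < 0}` of a horofunction. -/
def IsHoroball (G : Type*) [Group G] [MetricSpace G] (H : Set G) : Prop :=
  ∃ j : C(G, ℝ), IsHorofunction G j ∧ H = {x : G | j x < 0}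

lemma busemann_apply {G : Type*} [Group G] [MetricSpace G] (g x : G) :
    busemann G g x = dist g x - dist g 1 := rfl

/-- Any element of the closure of the Busemann maps is `1`-Lipschitz. -/
lemma horo_lipschitz {G : Type*} [Group G] [MetricSpace G] {j : C(G, ℝ)}
    (hj : j ∈ closure (Set.range (busemann G))) (x y : G) :
    j x - j y ≤ dist x y := by
  have hclosed : IsClosed {f : C(G, ℝ) | f x - f y ≤ dist x y} := by
    have hc : Continuous fun f : C(G, ℝ) => f x - f y :=
      (continuous_eval_const x).sub (continuous_eval_const y)
    exact isClosed_le hc continuous_const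
  have hsub : Set.range (busemann G) ⊆ {f : C(G, ℝ) | f x - f y ≤ dist x y} := by
    rintro _ ⟨g, rfl⟩
    simp only [Set.mem_setOf_eq, busemann_apply]
    have h1 := dist_triangle g y x
    have h2 : dist y x = dist x y := dist_comm y x
    linarith
  exact closure_minimal hsub hclosed hj

/-- Part (1): a horofunction unbounded below has horoball containing large balls. -/
lemma horo_part1 {G : Type*} [Group G] [MetricSpace G] (j : C(G, ℝ))
    (hj : j ∈ closure (Set.range (busemann G)))
    (hinf : ∀ c : ℝ, ∃ g : G, j g < c) (R : ℝ) (_hR : 0 < R) :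
    ∃ g : G, Metric.ball g R ⊆ {x : G | j x < 0} := by
  obtain ⟨g, hg⟩ := hinf (-R)
  refine ⟨g, fun x hx => ?_⟩
  have h1 := horo_lipschitz hj x g
  have hx' : dist x g < R := mem_ball.mp hx
  simp only [Set.mem_setOf_eq]
  linarith

section Word

variable {G : Type*} [Group G] [MetricSpace G] (S : Finset G)

/-- Every element is a product of generators and inverse generators. -/
lemma word_exists_list (hS : Subgroup.closure (S : Set G) = ⊤) (g : G) :
    ∃ l : List G, (∀ s ∈ l, s ∈ (S : Set G) ∪ (S : Set G)⁻¹) ∧ l.prod = g := by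
  have hg : g ∈ Subgroup.closure (S : Set G) := by rw [hS]; trivial
  have hg' : g ∈ Submonoid.closure ((S : Set G) ∪ (S : Set G)⁻¹) := by
    rw [← Subgroup.closure_toSubmonoid]
    exact hg
  exact Submonoid.exists_list_of_mem_closure hg'

variable (hS : Subgroup.closure (S : Set G) = ⊤)
  (hd : ∀ g h : G, dist g h = sInf {r : ℝ | ∃ l : List G,
      (∀ s ∈ l, s ∈ (S : Set G) ∪ (S : Set G)⁻¹) ∧ l.prod = g * h⁻¹ ∧ r = l.length})

include hS hd

lemma word_bddBelow (g h : G) :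
    BddBelow {r : ℝ | ∃ l : List G,
      (∀ s ∈ l, s ∈ (S : Set G) ∪ (S : Set G)⁻¹) ∧ l.prod = g * h⁻¹ ∧ r = l.length} := by
  refine ⟨0, ?_⟩
  rintro r ⟨l, -, -, rfl⟩
  exact Nat.cast_nonneg _

/-- The word distance is attained by a minimal word. -/
lemma word_attain (g h : G) :
    ∃ l : List G, (∀ s ∈ l, s ∈ (S : Set G) ∪ (S : Set G)⁻¹) ∧ l.prod = g * h⁻¹ ∧
      dist g h = l.length := by
  set N := {n : ℕ | ∃ l : List G,
      (∀ s ∈ l, s ∈ (S : Set G) ∪ (S : Set G)⁻¹) ∧ l.prod = g * h⁻¹ ∧ l.length = n} with hN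
  have hNne : N.Nonempty := by
    obtain ⟨l, hl, hlp⟩ := word_exists_list S hS (g * h⁻¹)
    exact ⟨l.length, l, hl, hlp, rfl⟩
  obtain ⟨l₀, hl₀, hl₀p, hl₀len⟩ := Nat.sInf_mem hNne
  refine ⟨l₀, hl₀, hl₀p, ?_⟩
  rw [hd]
  apply le_antisymm
  · exact csInf_le (word_bddBelow S hS hd g h) ⟨l₀, hl₀, hl₀p, rfl⟩
  · refine le_csInf ⟨(l₀.length : ℝ), l₀, hl₀, hl₀p, rfl⟩ ?_
    rintro r ⟨l, hl, hlp, rfl⟩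
    have h1 : sInf N ≤ l.length := Nat.sInf_le ⟨l, hl, hlp, rfl⟩
    have h2 : l₀.length ≤ l.length := hl₀len ▸ h1
    exact_mod_cast h2

lemma word_dist_le (g h : G) (l : List G)
    (hl : ∀ s ∈ l, s ∈ (S : Set G) ∪ (S : Set G)⁻¹) (hlp : l.prod = g * h⁻¹) :
    dist g h ≤ (l.length : ℝ) := by
  rw [hd]
  exact csInf_le (word_bddBelow S hS hd g h) ⟨l, hl, hlp, rfl⟩

lemma word_one_le_dist {g h : G} (hne : g ≠ h) : (1 : ℝ) ≤ dist g h := by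
  obtain ⟨l, -, hlp, hlen⟩ := word_attain S hS hd g h
  rw [hlen]
  have hlne : l ≠ [] := by
    rintro rfl
    simp only [List.prod_nil] at hlp
    exact hne (mul_inv_eq_one.mp hlp.symm)
  have h1 : 1 ≤ l.length := List.length_pos_iff.mpr hlne
  exact_mod_cast h1

lemma word_discrete : DiscreteTopology G := by
  apply discreteTopology_iff_isOpen_singleton.mpr
  intro g
  have hball : Metric.ball g 1 = {g} := by
    ext h
    simp only [Metric.mem_ball, Set.mem_singleton_iff]
    constructor
    · intro hlt
      by_contra hne
      exact absurd hlt (not_lt.mpr (word_one_le_dist S hS hd hne))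
    · rintro rfl; simp
  rw [← hball]
  exact isOpen_ball

end Word

theorem horoball_contains_large_balls
    {G : Type*} [Group G] [MetricSpace G] [ProperSpace G] [Infinite G]
    (hRI : ∀ g h f : G, dist (g * f) (h * f) = dist g h) :
    (∀ j : C(G, ℝ), IsHorofunction G j → (∀ c : ℝ, ∃ g : G, j g < c) →
      ∀ R > (0 : ℝ), ∃ g : G, Metric.ball g R ⊆ {x : G | j x < 0}) ∧
    (∀ S : Finset G, Subgroup.closure (S : Set G) = ⊤ →
      (∀ g h : G, dist g h = sInf {r : ℝ | ∃ l : List G,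
          (∀ s ∈ l, s ∈ (S : Set G) ∪ (S : Set G)⁻¹) ∧ l.prod = g * h⁻¹ ∧ r = l.length}) →
      ∀ H : Set G, IsHoroball G H → ∀ R > (0 : ℝ), ∃ g : G, Metric.ball g R ⊆ H) := by
  constructor
  · intro j hj hinf R hR
    exact horo_part1 j hj.1 hinf R hR
  · intro S hS hd H hH R hR
    obtain ⟨j, hj, rfl⟩ := hH
    apply horo_part1 j hj.1 _ R hR
    -- It suffices to show `j` is unbounded below.
    intro c
    have hdisc : DiscreteTopology G := word_discrete S hS hd
    -- for every `g`, `j` differs from `busemann g` somewhere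
    have hx : ∀ g : G, ∃ x : G, j x ≠ busemann G g x := by
      intro g
      by_contra hcon
      push_neg at hcon
      exact hj.2 ⟨g, (ContinuousMap.ext fun x => (hcon x).symm)⟩
    choose x hxne using hx
    set m : ℕ := ⌈(1 : ℝ) + |c|⌉₊ with hm_def
    have hm : (1 : ℝ) + |c| ≤ m := Nat.le_ceil _
    set B := Metric.closedBall (1 : G) (m : ℝ) with hB_def
    have hBfin : B.Finite := (isCompact_closedBall (1 : G) (m : ℝ)).finite_of_discrete
    -- the open neighbourhood of `j`
    set U₁ : Set C(G, ℝ) := ⋂ p ∈ B, (fun f : C(G, ℝ) => f p) ⁻¹' Metric.ball (j p) (1/2)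
      with hU₁_def
    set U₂ : Set C(G, ℝ) := ⋂ g ∈ B,
        (fun f : C(G, ℝ) => f (x g)) ⁻¹'
          Metric.ball (j (x g)) (dist (j (x g)) (busemann G g (x g)))
      with hU₂_def
    have hU₁open : IsOpen U₁ :=
      hBfin.isOpen_biInter fun p _ =>
        isOpen_ball.preimage (continuous_eval_const p)
    have hU₂open : IsOpen U₂ :=
      hBfin.isOpen_biInter fun g _ =>
        isOpen_ball.preimage (continuous_eval_const (x g))
    have hjU : j ∈ U₁ ∩ U₂ := by
      constructor
      · refine Set.mem_iInter₂.mpr fun p _ => ?_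
        simp [Metric.mem_ball]
      · refine Set.mem_iInter₂.mpr fun g _ => ?_
        simp only [Set.mem_preimage, Metric.mem_ball, dist_self]
        exact dist_pos.mpr (hxne g)
    obtain ⟨f, hfU, g₀, rfl⟩ :=
      _root_.mem_closure_iff.mp hj.1 (U₁ ∩ U₂) (hU₁open.inter hU₂open) hjU
    rcases lt_or_ge (dist g₀ (1 : G)) (m : ℝ) with hcase | hcase
    · -- impossible: `g₀` lies in the ball, contradicting the choice of `x g₀`
      exfalso
      have hg₀B : g₀ ∈ B := mem_closedBall.mpr hcase.le
      have h2 := Set.mem_iInter₂.mp hfU.2 g₀ hg₀B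
      simp only [Set.mem_preimage, Metric.mem_ball] at h2
      rw [dist_comm] at h2
      exact lt_irrefl _ h2
    · -- `g₀` is far: walk along a minimal word
      obtain ⟨l, hl, hlp, hlen⟩ := word_attain S hS hd g₀ 1
      rw [inv_one, mul_one] at hlp
      have hml : m ≤ l.length := by
        have h0 : (m : ℝ) ≤ (l.length : ℝ) := hlen ▸ hcase
        exact_mod_cast h0
      set k := l.length - m with hk_def
      set y := (l.drop k).prod with hy_def
      have hky : k ≤ l.length := Nat.sub_le _ _
      -- dist y 1 ≤ m
      have hy1 : dist y (1 : G) ≤ (m : ℝ) := by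
        have h0 := word_dist_le S hS hd y 1 (l.drop k)
          (fun s hs => hl s (List.mem_of_mem_drop hs))
          (by rw [inv_one, mul_one])
        rwa [List.length_drop, hk_def, Nat.sub_sub_self hml] at h0
      -- dist g₀ y ≤ k
      have hgy : dist g₀ y ≤ (k : ℝ) := by
        have hprod : (l.take k).prod = g₀ * y⁻¹ := by
          have h1 : (l.take k).prod * (l.drop k).prod = l.prod := by
            rw [← List.prod_append, List.take_append_drop]
          rw [hlp] at h1
          rw [hy_def, ← h1]
          group
        have h0 := word_dist_le S hS hd g₀ y (l.take k)
          (fun s hs => hl s (List.mem_of_mem_take hs)) hprod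
        rwa [List.length_take, Nat.min_eq_left hky] at h0
      have hbm : busemann G g₀ y ≤ -(m : ℝ) := by
        rw [busemann_apply, hlen]
        have hcast : (k : ℝ) = (l.length : ℝ) - (m : ℝ) := by
          rw [hk_def]
          exact Nat.cast_sub hml
        linarith
      have hyB : y ∈ B := mem_closedBall.mpr hy1
      have h1 := Set.mem_iInter₂.mp hfU.1 y hyB
      simp only [Set.mem_preimage, Metric.mem_ball, Real.dist_eq] at h1
      obtain ⟨h1a, h1b⟩ := abs_lt.mp h1
      refine ⟨y, ?_⟩
      have h3 : -c ≤ |c| := neg_le_abs c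
      linarith
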